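/- If the matrices R = (I + rS + 2r̂(r̂−r)Ŝ)⁻¹, P = rR(S − 2r̂Ŝ), Q = 2r̂²RŜ satisfy (R + P + Q)e = e, all entries of P and Q are nonnegative, and Re ≥ 0 componentwise, and the stage vector satisfies Y = R(e uⁿ) + P(Y + (Δt/r)F(Y)) + Q(Y + (Δt/r̂)F(Y) + (Δt²/(2r̂²))G(Y)) with ‖Y_j + (Δt/r)F(Y_j)‖ ≤ ‖Y_j‖ and ‖Y_j + (Δt/r̂)F(Y_j) + (Δt²/(2r̂²))G(Y_j)‖ ≤ ‖Y_j‖ for all stages j, then max_j ‖Y_j‖ ≤ ‖uⁿ‖. -/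

import Mathlib

/-- If `R, P, Q` have row sums `(R+P+Q)e = e`, `P, Q` are
entrywise nonnegative and strictly lower triangular, `Re ≥ 0` componentwise,
the stage relation
`Y_i = (Re)_i uⁿ + Σ_j P_ij (Y_j + (Δt/r) F(Y_j)) + Σ_j Q_ij (Y_j + (Δt/r̂) F(Y_j) + (Δt²/(2r̂²)) G(Y_j))`
holds, and each forward-Euler-type and Taylor-type stage combination is
monotone in `N`, then every stage satisfies `N (Y_i) ≤ N uⁿ`. -/
theorem canonical_shu_osher_monotonicity
    {V : Type*} [AddCommGroup V] [Module ℝ V]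
    (N : V → ℝ)
    (hadd : ∀ v w : V, N (v + w) ≤ N v + N w)
    (hhom : ∀ (c : ℝ) (v : V), N (c • v) = |c| * N v)
    (s : ℕ) (R P Q : Matrix (Fin (s + 1)) (Fin (s + 1)) ℝ)
    (F G : V → V) (un : V) (Y : Fin (s + 1) → V) (Δt r rh : ℝ)
    (hPpos : ∀ i j, 0 ≤ P i j) (hQpos : ∀ i j, 0 ≤ Q i j)
    (hRe : ∀ i, 0 ≤ ∑ j, R i j)
    (hrow : ∀ i, ∑ j, (R i j + P i j + Q i j) = 1)
    (hPlow : ∀ i j : Fin (s + 1), (i : ℕ) ≤ (j : ℕ) → P i j = 0)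
    (hQlow : ∀ i j : Fin (s + 1), (i : ℕ) ≤ (j : ℕ) → Q i j = 0)
    (hstage : ∀ i, Y i = (∑ j, R i j) • un
      + ∑ j, P i j • (Y j + (Δt / r) • F (Y j))
      + ∑ j, Q i j • (Y j + (Δt / rh) • F (Y j) + (Δt^2 / (2 * rh^2)) • G (Y j)))
    (hFEmono : ∀ j, N (Y j + (Δt / r) • F (Y j)) ≤ N (Y j))
    (hTSmono : ∀ j, N (Y j + (Δt / rh) • F (Y j) + (Δt^2 / (2 * rh^2)) • G (Y j)) ≤ N (Y j)) :
    ∀ i, N (Y i) ≤ N un := by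

  classical
  have hN0 : N 0 = 0 := by
    have := hhom 0 0
    simpa using this
  have hNnn : ∀ v, 0 ≤ N v := by
    intro v
    have h1 := hadd v (-v)
    have h2 : N (-v) = N v := by
      have := hhom (-1) v; simpa using this
    simp only [add_neg_cancel, hN0, h2] at h1
    linarith
  have hNun : 0 ≤ N un := hNnn un
  have hsum : ∀ (f : Fin (s+1) → V), N (∑ j, f j) ≤ ∑ j, N (f j) := by
    intro f
    exact Finset.le_sum_of_subadditive N hN0.le hadd _ _
  have main : ∀ n : ℕ, ∀ i : Fin (s+1), (i : ℕ) = n → N (Y i) ≤ N un := by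
    intro n
    induction n using Nat.strong_induction_on with
    | _ n ih =>
      intro i hi
      have hYle : ∀ j : Fin (s+1), (j : ℕ) < (i : ℕ) → N (Y j) ≤ N un := by
        intro j hj
        exact ih (j : ℕ) (by omega) j rfl
      rw [hstage i]
      have h1 : N ((∑ j, R i j) • un
          + ∑ j, P i j • (Y j + (Δt / r) • F (Y j))
          + ∑ j, Q i j • (Y j + (Δt / rh) • F (Y j) + (Δt^2 / (2 * rh^2)) • G (Y j)))
          ≤ N ((∑ j, R i j) • un)
          + N (∑ j, P i j • (Y j + (Δt / r) • F (Y j)))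
          + N (∑ j, Q i j • (Y j + (Δt / rh) • F (Y j) + (Δt^2 / (2 * rh^2)) • G (Y j))) := by
        calc _ ≤ N ((∑ j, R i j) • un + ∑ j, P i j • (Y j + (Δt / r) • F (Y j)))
              + N (∑ j, Q i j • (Y j + (Δt / rh) • F (Y j) + (Δt^2 / (2 * rh^2)) • G (Y j))) :=
                hadd _ _
          _ ≤ _ := by
                have := hadd ((∑ j, R i j) • un) (∑ j, P i j • (Y j + (Δt / r) • F (Y j)))
                linarith
      have hR : N ((∑ j, R i j) • un) = (∑ j, R i j) * N un := by
        rw [hhom, abs_of_nonneg (hRe i)]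
      have hPbound : N (∑ j, P i j • (Y j + (Δt / r) • F (Y j))) ≤ ∑ j, P i j * N un := by
        refine le_trans (hsum _) (Finset.sum_le_sum ?_)
        intro j _
        rw [hhom, abs_of_nonneg (hPpos i j)]
        rcases le_or_gt (i : ℕ) (j : ℕ) with h | h
        · rw [hPlow i j h]; simp
        · exact mul_le_mul_of_nonneg_left (le_trans (hFEmono j) (hYle j h)) (hPpos i j)
      have hQbound : N (∑ j, Q i j • (Y j + (Δt / rh) • F (Y j) + (Δt^2 / (2 * rh^2)) • G (Y j)))
          ≤ ∑ j, Q i j * N un := by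
        refine le_trans (hsum _) (Finset.sum_le_sum ?_)
        intro j _
        rw [hhom, abs_of_nonneg (hQpos i j)]
        rcases le_or_gt (i : ℕ) (j : ℕ) with h | h
        · rw [hQlow i j h]; simp
        · exact mul_le_mul_of_nonneg_left (le_trans (hTSmono j) (hYle j h)) (hQpos i j)
      have hrow' : (∑ j, R i j) + (∑ j, P i j) + (∑ j, Q i j) = 1 := by
        have := hrow i
        rw [← Finset.sum_add_distrib, ← Finset.sum_add_distrib]
        exact this
      have : (∑ j, R i j) * N un + (∑ j, P i j * N un) + (∑ j, Q i j * N un) = N un := by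
        rw [← Finset.sum_mul, ← Finset.sum_mul]
        nlinarith [hrow']
      linarith
  intro i
  exact main (i : ℕ) i rfl
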